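/- A function f : {-1,0,1}ⁿ → ℝ ∪ {∞} is bisubmodular (i.e., f(x) + f(y) ≥ f(x ∧ y) + f(x ⊔ y) for all x, y) if and only if its Lovász extension (the piecewise-linear extension to [-1,1]ⁿ interpolating f on each simplex with vertices 0, s_{i₁}, s_{i₁}+s_{i₂}, ..., s_{i₁}+⋯+s_{i_n} for permutations (i₁,...,i_n) and signs s_i ∈ {e_i, −e_i}) is a convex function on [-1,1]ⁿ. -/

import Mathlib

open scoped Classical

/-- The three-element semilattice `S₂ = {-1,0,1}`: `zero` below the incomparable `pos`,
`neg`. -/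
inductive S2 : Type
  | zero | pos | neg
deriving DecidableEq

instance : Fintype S2 :=
  ⟨{S2.zero, S2.pos, S2.neg}, fun x => by cases x <;> simp⟩

/-- Componentwise meet on `S₂`: `a ∧ b = a` if `a = b`, else `0`. -/
def S2.meet (a b : S2) : S2 := if a = b then a else S2.zero

/-- Componentwise pseudo join on `S₂`: the larger of `a, b` (in the order `0 < ±1`) if
comparable, and `0` if `a = -b ≠ 0`. -/
def S2.pj (a b : S2) : S2 :=
  if a = b then a else if a = S2.zero then b else if b = S2.zero then a else S2.zero

/-- The point of `S₂ⁿ` obtained from `x ∈ [-1,1]ⁿ` by thresholding at level `t`: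
component `i` is `sign (x i)` if `t < |x i|` and `0` otherwise. -/
noncomputable def thresh {n : ℕ} (x : Fin n → ℝ) (t : ℝ) : Fin n → S2 := fun i =>
  if t < |x i| then (if 0 < x i then S2.pos else S2.neg) else S2.zero

/-- The barycentric weight of the vertex `u ∈ S₂ⁿ` in the chain decomposition of
`x ∈ [-1,1]ⁿ`: the measure of the set of levels `t ∈ (0,1]` whose threshold point is `u`. -/
noncomputable def weight {n : ℕ} (x : Fin n → ℝ) (u : Fin n → S2) : ℝ :=
  (MeasureTheory.volume {t : ℝ | t ∈ Set.Ioc (0 : ℝ) 1 ∧ thresh x t = u}).toReal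

/-- The Lovász extension of `f : S₂ⁿ → ℝ ∪ {∞}` to `[-1,1]ⁿ`: the piecewise-linear
interpolation of `f` along the chain containing `x`, i.e. the weighted combination of the
values of `f` at the threshold points of `x`. -/
noncomputable def lovasz {n : ℕ} (f : (Fin n → S2) → EReal) (x : Fin n → ℝ) : EReal :=
  ∑ u : Fin n → S2, ((weight x u : ℝ) : EReal) * f u

-- ### Part 0 : S2 basics
namespace S2

def emb : S2 → ℝ | zero => 0 | pos => 1 | neg => -1

lemma emb_abs_le (a : S2) : |emb a| ≤ 1 := by cases a <;> simp [emb]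

lemma emb_eq_zero {a : S2} : emb a = 0 ↔ a = zero := by cases a <;> simp [emb] <;> norm_num

lemma emb_meet_pj (a b : S2) : emb (meet a b) + emb (pj a b) = emb a + emb b := by
  cases a <;> cases b <;> simp [meet, pj, emb] <;> norm_num

end S2

def sle {n : ℕ} (u v : Fin n → S2) : Prop := ∀ i, u i = S2.zero ∨ u i = v i

lemma sle_refl {n} (u : Fin n → S2) : sle u u := fun i => Or.inr rfl

lemma sle_trans {n} {u v w : Fin n → S2} (h1 : sle u v) (h2 : sle v w) : sle u w := by
  intro i
  rcases h1 i with h | h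
  · exact Or.inl h
  · rcases h2 i with h' | h'
    · exact Or.inl (h.trans h')
    · exact Or.inr (h.trans h')

lemma sle_antisymm {n} {u v : Fin n → S2} (h1 : sle u v) (h2 : sle v u) : u = v := by
  funext i
  rcases h1 i with h | h
  · rcases h2 i with h' | h'
    · rw [h, h']
    · rw [h] at h' ⊢; exact h'.symm
  · exact h

lemma sle_zero {n} (u : Fin n → S2) : sle (fun _ => S2.zero) u := fun i => Or.inl rfl

def suppF {n : ℕ} (u : Fin n → S2) : Finset (Fin n) :=
  Finset.univ.filter (fun i => u i ≠ S2.zero)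

lemma sle_supp_subset {n} {u v : Fin n → S2} (h : sle u v) : suppF u ⊆ suppF v := by
  intro i hi
  simp only [suppF, Finset.mem_filter, Finset.mem_univ, true_and] at hi ⊢
  rcases h i with h' | h'
  · exact absurd h' hi
  · rw [← h']; exact hi

lemma sle_eq_of_card {n} {u v : Fin n → S2} (h : sle u v)
    (hc : (suppF v).card ≤ (suppF u).card) : u = v := by
  have hsub := sle_supp_subset h
  have heq : suppF u = suppF v := Finset.eq_of_subset_of_card_le hsub hc
  funext i
  rcases h i with h' | h'
  · by_cases hv : v i = S2.zero
    · rw [h', hv]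
    · have : i ∈ suppF v := by simp [suppF, hv]
      rw [← heq] at this
      simp only [suppF, Finset.mem_filter, Finset.mem_univ, true_and] at this
      exact absurd h' this
  · exact h'

lemma chain_max {n} (s : Finset (Fin n → S2)) (hc : ∀ u ∈ s, ∀ v ∈ s, sle u v ∨ sle v u)
    (hne : s.Nonempty) : ∃ m ∈ s, ∀ v ∈ s, sle v m := by
  obtain ⟨m, hm, hmax⟩ := Finset.exists_max_image s (fun u => (suppF u).card) hne
  refine ⟨m, hm, fun v hv => ?_⟩
  rcases hc v hv m hm with h | h
  · exact h
  · have : m = v := sle_eq_of_card h (hmax v hv)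
    rw [← this]; exact sle_refl m

lemma chain_min {n} (s : Finset (Fin n → S2)) (hc : ∀ u ∈ s, ∀ v ∈ s, sle u v ∨ sle v u)
    (hne : s.Nonempty) : ∃ m ∈ s, ∀ v ∈ s, sle m v := by
  obtain ⟨m, hm, hmin⟩ := Finset.exists_min_image s (fun u => (suppF u).card) hne
  refine ⟨m, hm, fun v hv => ?_⟩
  rcases hc m hm v hv with h | h
  · exact h
  · have : v = m := sle_eq_of_card h (hmin v hv)
    rw [this]; exact sle_refl m

-- ### Part 1 : measure lemmas
open MeasureTheory

def fib {n : ℕ} (x : Fin n → ℝ) (u : Fin n → S2) : Set ℝ := {t | thresh x t = u}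

lemma measurableSet_coordfib {n} (x : Fin n → ℝ) (i : Fin n) (c : S2) :
    MeasurableSet {t : ℝ | thresh x t i = c} := by
  by_cases h0 : c = S2.zero
  · have : {t : ℝ | thresh x t i = c} = Set.Ici |x i| := by
      ext t
      rcases lt_or_ge t |x i| with h | h
      · simp only [thresh, if_pos h, Set.mem_setOf_eq, Set.mem_Ici, h0]
        constructor
        · intro hc; split_ifs at hc <;> simp_all
        · intro hc; linarith
      · simp only [thresh, if_neg (not_lt.2 h), Set.mem_setOf_eq, Set.mem_Ici, h0]
        simp [h]
    rw [this]; exact measurableSet_Ici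
  · by_cases hs : (if 0 < x i then S2.pos else S2.neg) = c
    · have : {t : ℝ | thresh x t i = c} = Set.Iio |x i| := by
        ext t
        rcases lt_or_ge t |x i| with h | h
        · simp [thresh, if_pos h, hs, h]
        · simp only [thresh, if_neg (not_lt.2 h), Set.mem_setOf_eq, Set.mem_Iio]
          constructor
          · intro hc; exact absurd hc.symm h0
          · intro hc; linarith
      rw [this]; exact measurableSet_Iio
    · have : {t : ℝ | thresh x t i = c} = ∅ := by
        ext t
        rcases lt_or_ge t |x i| with h | h
        · simp [thresh, if_pos h, hs]
        · simp only [thresh, if_neg (not_lt.2 h), Set.mem_setOf_eq, Set.mem_empty_iff_false,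
            iff_false]
          intro hc; exact h0 hc.symm
      rw [this]; exact MeasurableSet.empty
  
lemma measurableSet_fib {n} (x : Fin n → ℝ) (u : Fin n → S2) : MeasurableSet (fib x u) := by
  have : fib x u = ⋂ i, {t : ℝ | thresh x t i = u i} := by
    ext t; simp [fib, funext_iff, Set.mem_iInter]
  rw [this]
  exact MeasurableSet.iInter fun i => measurableSet_coordfib x i (u i)

lemma fib_partition {n} (x : Fin n → ℝ) (S : Set ℝ) (hS : MeasurableSet S) :
    volume S = ∑ u : Fin n → S2, volume (S ∩ fib x u) := by
  have hcov : S = ⋃ u ∈ (Finset.univ : Finset (Fin n → S2)), S ∩ fib x u := by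
    ext t
    simp only [Set.mem_iUnion, Finset.mem_univ, Set.mem_inter_iff, exists_prop, true_and]
    exact ⟨fun ht => ⟨thresh x t, ht, rfl⟩, fun ⟨u, ht, _⟩ => ht⟩
  conv_lhs => rw [hcov]
  rw [measure_biUnion_finset]
  · intro u _ v _ huv
    refine Set.disjoint_left.mpr fun t ht ht' => huv ?_
    exact ht.2.symm.trans ht'.2
  · exact fun u _ => hS.inter (measurableSet_fib x u)

lemma weight_eq {n} (x : Fin n → ℝ) (u : Fin n → S2) :
    weight x u = (volume (Set.Ioc (0:ℝ) 1 ∩ fib x u)).toReal := rfl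

lemma vol_fib_ne_top {n} (x : Fin n → ℝ) (u : Fin n → S2) :
    volume (Set.Ioc (0:ℝ) 1 ∩ fib x u) ≠ ⊤ := by
  refine ne_top_of_le_ne_top ?_ (measure_mono Set.inter_subset_left)
  simp [Real.volume_Ioc]

lemma weight_nonneg {n} (x : Fin n → ℝ) (u : Fin n → S2) : 0 ≤ weight x u :=
  ENNReal.toReal_nonneg

lemma sum_weight {n} (x : Fin n → ℝ) : ∑ u : Fin n → S2, weight x u = 1 := by
  have h := fib_partition x (Set.Ioc (0:ℝ) 1) measurableSet_Ioc
  have h2 : ((volume (Set.Ioc (0:ℝ) 1)).toReal) = 1 := by simp [Real.volume_Ioc]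
  rw [← h2, h, ENNReal.toReal_sum (fun u _ => vol_fib_ne_top x u)]
  rfl

lemma sum_weight_coord {n} (x : Fin n → ℝ) (i : Fin n) (c : S2) :
    ∑ u ∈ Finset.univ.filter (fun u : Fin n → S2 => u i = c), weight x u
      = (volume (Set.Ioc (0:ℝ) 1 ∩ {t | thresh x t i = c})).toReal := by
  have hS : MeasurableSet (Set.Ioc (0:ℝ) 1 ∩ {t | thresh x t i = c}) :=
    measurableSet_Ioc.inter (measurableSet_coordfib x i c)
  rw [fib_partition x _ hS, ENNReal.toReal_sum]
  · rw [Finset.sum_filter]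
    refine Finset.sum_congr rfl fun u _ => ?_
    by_cases hu : u i = c
    · rw [if_pos hu, weight_eq]
      have hseteq : Set.Ioc (0:ℝ) 1 ∩ {t | thresh x t i = c} ∩ fib x u
          = Set.Ioc (0:ℝ) 1 ∩ fib x u := by
        ext t
        simp only [fib, Set.mem_inter_iff, Set.mem_setOf_eq]
        constructor
        · exact fun h => ⟨h.1.1, h.2⟩
        · exact fun h => ⟨⟨h.1, by rw [show thresh x t = u from h.2, hu]⟩, h.2⟩
      rw [hseteq]
    · rw [if_neg hu]
      have : Set.Ioc (0:ℝ) 1 ∩ {t | thresh x t i = c} ∩ fib x u = ∅ := by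
        ext t
        simp only [Set.mem_inter_iff, Set.mem_setOf_eq, fib, Set.mem_empty_iff_false, iff_false]
        rintro ⟨⟨_, hc'⟩, hth⟩
        exact hu (by rw [show thresh x t = u from hth] at hc'; exact hc')
      rw [this]; simp
  · intro u _
    refine ne_top_of_le_ne_top (vol_fib_ne_top x u) (measure_mono ?_)
    exact Set.inter_subset_inter_left _ Set.inter_subset_left

lemma Ioc_inter_Iio (a : ℝ) (ha : a ≤ 1) :
    Set.Ioc (0:ℝ) 1 ∩ Set.Iio a = Set.Ioo 0 a := by
  ext t
  simp only [Set.mem_inter_iff, Set.mem_Ioc, Set.mem_Iio, Set.mem_Ioo]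
  constructor
  · rintro ⟨⟨h1, _⟩, h3⟩; exact ⟨h1, h3⟩
  · rintro ⟨h1, h2⟩; exact ⟨⟨h1, by linarith⟩, h2⟩

lemma coordfib_pos {n} (x : Fin n → ℝ) (i : Fin n) (hx : |x i| ≤ 1) :
    (volume (Set.Ioc (0:ℝ) 1 ∩ {t | thresh x t i = S2.pos})).toReal = max (x i) 0 := by
  by_cases h : 0 < x i
  · have habs : |x i| = x i := abs_of_pos h
    have hset : {t : ℝ | thresh x t i = S2.pos} = Set.Iio (x i) := by
      ext t
      simp only [thresh, Set.mem_setOf_eq, Set.mem_Iio]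
      rcases lt_or_ge t |x i| with h' | h'
      · simp [if_pos h', if_pos h, habs ▸ h']
      · rw [if_neg (not_lt.2 h')]
        rw [habs] at h'
        constructor
        · intro hc; cases hc
        · intro hc; linarith
    rw [hset, Ioc_inter_Iio _ (by linarith [habs ▸ hx]), Real.volume_Ioo,
      ENNReal.toReal_ofReal (by linarith)]
    simp [max_eq_left h.le]
  · have hset : Set.Ioc (0:ℝ) 1 ∩ {t : ℝ | thresh x t i = S2.pos} = ∅ := by
      ext t
      simp only [thresh, Set.mem_inter_iff, Set.mem_setOf_eq, Set.mem_empty_iff_false, iff_false]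
      rintro ⟨_, hc⟩
      split_ifs at hc with h1 h2
    rw [hset]
    simp only [measure_empty, ENNReal.toReal_zero]
    exact (max_eq_right (le_of_not_gt h)).symm

lemma coordfib_neg {n} (x : Fin n → ℝ) (i : Fin n) (hx : |x i| ≤ 1) :
    (volume (Set.Ioc (0:ℝ) 1 ∩ {t | thresh x t i = S2.neg})).toReal = max (-(x i)) 0 := by
  by_cases h : 0 < x i
  · have hset : Set.Ioc (0:ℝ) 1 ∩ {t : ℝ | thresh x t i = S2.neg} = ∅ := by
      ext t
      simp only [thresh, Set.mem_inter_iff, Set.mem_setOf_eq, Set.mem_empty_iff_false, iff_false]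
      rintro ⟨_, hc⟩
      split_ifs at hc with h1 h2
    rw [hset]
    simp only [measure_empty, ENNReal.toReal_zero]
    exact (max_eq_right (by linarith : -(x i) ≤ 0)).symm
  · have hset : {t : ℝ | thresh x t i = S2.neg} = Set.Iio |x i| := by
      ext t
      simp only [thresh, Set.mem_setOf_eq, Set.mem_Iio]
      rcases lt_or_ge t |x i| with h' | h'
      · simp [if_pos h', if_neg h, h']
      · rw [if_neg (not_lt.2 h')]
        constructor
        · intro hc; cases hc
        · intro hc; linarith
    have h' := le_of_not_gt h
    rw [hset, Ioc_inter_Iio _ hx, Real.volume_Ioo,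
      ENNReal.toReal_ofReal (by simp [abs_nonneg])]
    rw [abs_of_nonpos h']
    simp [max_eq_left (by linarith : (0:ℝ) ≤ -(x i))]

lemma sum_weight_emb {n} (x : Fin n → ℝ) (i : Fin n) (hx : |x i| ≤ 1) :
    ∑ u : Fin n → S2, weight x u * S2.emb (u i) = x i := by
  rw [← Finset.sum_fiberwise Finset.univ (fun u : Fin n → S2 => u i)
    (fun u => weight x u * S2.emb (u i))]
  have key : ∀ c : S2, ∑ u ∈ Finset.univ.filter (fun u : Fin n → S2 => u i = c),
      weight x u * S2.emb (u i)
      = (volume (Set.Ioc (0:ℝ) 1 ∩ {t | thresh x t i = c})).toReal * S2.emb c := by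
    intro c
    have hcongr : ∑ u ∈ Finset.univ.filter (fun u : Fin n → S2 => u i = c),
        weight x u * S2.emb (u i)
        = ∑ u ∈ Finset.univ.filter (fun u : Fin n → S2 => u i = c), weight x u * S2.emb c :=
      Finset.sum_congr rfl fun u hu => by rw [(Finset.mem_filter.1 hu).2]
    rw [hcongr, ← Finset.sum_mul, sum_weight_coord]
  have huniv : (Finset.univ : Finset S2) = {S2.zero, S2.pos, S2.neg} := by decide
  rw [huniv, Finset.sum_insert (by decide), Finset.sum_insert (by decide),
    Finset.sum_singleton, key, key, key, coordfib_pos x i hx, coordfib_neg x i hx]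
  simp only [S2.emb]
  rcases lt_trichotomy (x i) 0 with h | h | h
  · rw [max_eq_right (by linarith), max_eq_left (by linarith)]; ring
  · rw [h]; norm_num
  · rw [max_eq_left (by linarith), max_eq_right (by linarith)]; ring

-- ### Part 2 : EReal helpers

lemma ereal_coe_sum {α : Type*} (s : Finset α) (h : α → ℝ) :
    ((∑ a ∈ s, h a : ℝ) : EReal) = ∑ a ∈ s, ((h a : ℝ) : EReal) := by
  classical
  induction s using Finset.induction_on with
  | empty => simp
  | insert a s ha ih => rw [Finset.sum_insert ha, Finset.sum_insert ha,
      EReal.coe_add, ih]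

lemma ereal_term_ne_bot (c : ℝ) (hc : 0 ≤ c) (a : EReal) (ha : a ≠ ⊥) : (c : EReal) * a ≠ ⊥ := by
  induction a with
  | bot => exact absurd rfl ha
  | coe r => rw [← EReal.coe_mul]; exact EReal.coe_ne_bot _
  | top =>
    rcases eq_or_lt_of_le hc with h | h
    · rw [← h]; simp
    · rw [EReal.mul_top_of_pos (by exact_mod_cast h)]; simp

lemma ereal_sum_ne_bot {α : Type*} {s : Finset α} {F : α → EReal}
    (h : ∀ a ∈ s, F a ≠ ⊥) : ∑ a ∈ s, F a ≠ ⊥ := by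
  classical
  induction s using Finset.induction_on with
  | empty => simp
  | insert a s ha ih =>
    rw [Finset.sum_insert ha]
    intro hc
    rcases EReal.add_eq_bot_iff.1 hc with h' | h'
    · exact h a (Finset.mem_insert_self a s) h'
    · exact ih (fun b hb => h b (Finset.mem_insert_of_mem hb)) h'

lemma ereal_term_ne_top_of_sum {α : Type*} {s : Finset α} {F : α → EReal}
    (hb : ∀ a ∈ s, F a ≠ ⊥) (hs : ∑ a ∈ s, F a ≠ ⊤) : ∀ a ∈ s, F a ≠ ⊤ := by
  classical
  intro a ha hc
  apply hs
  rw [← Finset.add_sum_erase s F ha, hc]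
  exact EReal.top_add_of_ne_bot (ereal_sum_ne_bot fun b hb' => hb b (Finset.mem_of_mem_erase hb'))

lemma ereal_mul_add (r : ℝ) (hr : 0 ≤ r) (a b : EReal) (ha : a ≠ ⊥) (hb : b ≠ ⊥) :
    (r : EReal) * (a + b) = (r : EReal) * a + (r : EReal) * b := by
  rcases eq_or_lt_of_le hr with h | h
  · rw [← h]; simp
  · have hr' : (0 : EReal) < (r : EReal) := by exact_mod_cast h
    induction a with
    | bot => exact absurd rfl ha
    | coe p =>
      induction b with
      | bot => exact absurd rfl hb
      | coe q => rw [← EReal.coe_add, ← EReal.coe_mul, ← EReal.coe_mul, ← EReal.coe_mul,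
          ← EReal.coe_add, mul_add]
      | top =>
        rw [EReal.add_top_of_ne_bot (EReal.coe_ne_bot p), EReal.mul_top_of_pos hr',
          EReal.add_top_of_ne_bot]
        rw [← EReal.coe_mul]; exact EReal.coe_ne_bot _
    | top =>
      induction b with
      | bot => exact absurd rfl hb
      | coe q =>
        rw [EReal.top_add_of_ne_bot (EReal.coe_ne_bot q), EReal.mul_top_of_pos hr',
          EReal.top_add_of_ne_bot]
        rw [← EReal.coe_mul]; exact EReal.coe_ne_bot _
      | top =>
        rw [EReal.top_add_top, EReal.mul_top_of_pos hr', EReal.top_add_top]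

lemma ereal_coe_mul_sum (r : ℝ) (hr : 0 ≤ r) {α : Type*} {s : Finset α} {F : α → EReal}
    (h : ∀ a ∈ s, F a ≠ ⊥) : (r : EReal) * ∑ a ∈ s, F a = ∑ a ∈ s, (r : EReal) * F a := by
  classical
  induction s using Finset.induction_on with
  | empty => simp
  | insert a s ha ih =>
    rw [Finset.sum_insert ha, Finset.sum_insert ha,
      ereal_mul_add r hr _ _ (h a (Finset.mem_insert_self a s))
        (ereal_sum_ne_bot fun b hb => h b (Finset.mem_insert_of_mem hb)),
      ih (fun b hb => h b (Finset.mem_insert_of_mem hb))]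

lemma ereal_sum_ite_mul {n : ℕ} (f : (Fin n → S2) → EReal) (a : Fin n → S2) (c : ℝ) :
    ∑ u : Fin n → S2, (((if u = a then c else 0 : ℝ)) : EReal) * f u = (c : EReal) * f a := by
  classical
  rw [Finset.sum_eq_single a]
  · rw [if_pos rfl]
  · intro b _ hb
    rw [if_neg hb]
    simp
  · intro h; exact absurd (Finset.mem_univ a) h

-- ### Part 3 : chain representation lemma

lemma S2.emb_abs_eq_one {a : S2} (h : a ≠ S2.zero) : |S2.emb a| = 1 := by
  cases a <;> simp [S2.emb] at h ⊢

lemma weight_chain {n : ℕ} (μ : (Fin n → S2) → ℝ) (h0 : ∀ u, 0 ≤ μ u)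
    (h1 : (∑ u : Fin n → S2, μ u) ≤ 1)
    (hch : ∀ u v, μ u ≠ 0 → μ v ≠ 0 → sle u v ∨ sle v u) (w : Fin n → S2) :
    weight (fun i => ∑ u : Fin n → S2, μ u * S2.emb (u i)) w
      = μ w + (if w = (fun _ => S2.zero) then 1 - ∑ u : Fin n → S2, μ u else 0) := by
  classical
  set z : Fin n → ℝ := fun i => ∑ u : Fin n → S2, μ u * S2.emb (u i) with hz
  set zv : Fin n → S2 := fun _ => S2.zero with hzv
  set c : ℝ := ∑ u : Fin n → S2, μ u with hc
  set T : (Fin n → S2) → ℝ := fun u => ∑ v ∈ Finset.univ.filter (fun v => sle u v), μ v with hT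
  have hc0 : 0 ≤ c := Finset.sum_nonneg fun v _ => h0 v
  have hTle : ∀ u, T u ≤ c :=
    fun u => Finset.sum_le_sum_of_subset_of_nonneg (Finset.filter_subset _ _)
      (fun v _ _ => h0 v)
  have hmemT : ∀ u : Fin n → S2, u ∈ Finset.univ.filter (fun v => sle u v) :=
    fun u => Finset.mem_filter.2 ⟨Finset.mem_univ u, sle_refl u⟩
  have hTm : ∀ u, μ u ≤ T u := fun u => Finset.single_le_sum (fun v _ => h0 v) (hmemT u)
  have hT0 : ∀ u, 0 ≤ T u := fun u => Finset.sum_nonneg fun v _ => h0 v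
  have hTzv : T zv = c := by
    rw [hT, hc]
    simp only
    rw [Finset.filter_true_of_mem (fun v _ => sle_zero v)]
  have hTsub : ∀ u : Fin n → S2, T u - μ u
      = ∑ v ∈ (Finset.univ.filter (fun v => sle u v)).erase u, μ v := by
    intro u
    have := Finset.add_sum_erase _ μ (hmemT u)
    simp only [hT]
    linarith
  set P : Fin n → Finset (Fin n → S2) :=
    fun i => Finset.univ.filter (fun v => μ v ≠ 0 ∧ v i ≠ S2.zero) with hP
  set m : Fin n → ℝ := fun i => ∑ v ∈ P i, μ v with hm
  have hm0 : ∀ i, 0 ≤ m i := fun i => Finset.sum_nonneg fun v _ => h0 v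
  have hzP : ∀ i, z i = ∑ v ∈ P i, μ v * S2.emb (v i) := by
    intro i
    rw [hz]
    simp only
    rw [← Finset.sum_filter_of_ne (p := fun v => μ v ≠ 0 ∧ v i ≠ S2.zero)
      (f := fun v => μ v * S2.emb (v i)) ?_]
    intro v _ hne
    rcases mul_ne_zero_iff.1 hne with ⟨hμ, he⟩
    exact ⟨hμ, fun h => he (by rw [h]; rfl)⟩
  have habsz : ∀ i, |z i| ≤ m i := by
    intro i
    rw [hzP i]
    refine le_trans (Finset.abs_sum_le_sum_abs _ _) ?_
    refine Finset.sum_le_sum fun v _ => ?_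
    rw [abs_mul, abs_of_nonneg (h0 v)]
    exact mul_le_of_le_one_right (h0 v) (S2.emb_abs_le _)
  have hsign : ∀ i (v : Fin n → S2), μ v ≠ 0 → v i ≠ S2.zero → z i = m i * S2.emb (v i) := by
    intro i v hμ hvi
    rw [hzP i, hm]
    simp only
    rw [Finset.sum_mul]
    refine Finset.sum_congr rfl fun v' hv' => ?_
    obtain ⟨_, hμ', hv'i⟩ := Finset.mem_filter.1 hv'
    congr 1
    rcases hch v' v hμ' hμ with h | h
    · rcases h i with h' | h'
      · exact absurd h' hv'i
      · rw [h']
    · rcases h i with h' | h'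
      · exact absurd h' hvi
      · rw [h']
  have hm_ge : ∀ i (v : Fin n → S2), μ v ≠ 0 → v i ≠ S2.zero → T v ≤ m i := by
    intro i v hμ hvi
    rw [hT, hm]
    simp only
    rw [← Finset.sum_filter_of_ne (p := fun v' => μ v' ≠ 0) (f := μ) (fun v' _ h => h)]
    refine Finset.sum_le_sum_of_subset_of_nonneg ?_ (fun v' _ _ => h0 v')
    intro v' hv'
    rw [Finset.filter_filter] at hv'
    obtain ⟨_, hle, hμ'⟩ := Finset.mem_filter.1 hv'
    refine Finset.mem_filter.2 ⟨Finset.mem_univ _, hμ', ?_⟩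
    rcases hle i with h' | h'
    · exact absurd h' hvi
    · rw [← h']; exact hvi
  have hm_le : ∀ i (u : Fin n → S2), (μ u ≠ 0 ∨ u = zv) → u i = S2.zero →
      m i ≤ T u - μ u := by
    intro i u hor hui
    rw [hTsub u, hm]
    simp only
    refine Finset.sum_le_sum_of_subset_of_nonneg ?_ (fun v' _ _ => h0 v')
    intro v hv
    obtain ⟨_, hμv, hvi⟩ := Finset.mem_filter.1 hv
    have hvu : v ≠ u := fun h => hvi (by rw [h]; exact hui)
    have hle : sle u v := by
      rcases hor with hμu | rfl
      · rcases hch u v hμu hμv with h | h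
        · exact h
        · rcases h i with h' | h'
          · exact absurd h' hvi
          · exact absurd (h'.trans hui) hvi
      · exact sle_zero v
    exact Finset.mem_erase.2 ⟨hvu, Finset.mem_filter.2 ⟨Finset.mem_univ _, hle⟩⟩
  set cond : (Fin n → S2) → ℝ → Prop :=
    fun u t => (μ u ≠ 0 ∨ u = zv) ∧ T u - μ u ≤ t ∧ (u ≠ zv → t < T u) with hcond
  -- key1 : cond implies thresh
  have key1 : ∀ t, t ∈ Set.Ioc (0:ℝ) 1 → ∀ u, cond u t → thresh z t = u := by
    rintro t ht u ⟨hor, hlo, hhi⟩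
    funext i
    show (if t < |z i| then (if 0 < z i then S2.pos else S2.neg) else S2.zero) = u i
    by_cases hui : u i = S2.zero
    · have hle2 : ¬ t < |z i| :=
        not_lt.2 (le_trans (le_trans (habsz i) (hm_le i u hor hui)) hlo)
      rw [if_neg hle2, hui]
    · have hne : u ≠ zv := fun h => hui (by rw [h])
      have hμu : μ u ≠ 0 := by
        rcases hor with h | h
        · exact h
        · exact absurd h hne
      have hzi := hsign i u hμu hui
      have habs : |z i| = m i := by
        rw [hzi, abs_mul, S2.emb_abs_eq_one hui, mul_one, abs_of_nonneg (hm0 i)]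
      have hlt : t < m i := lt_of_lt_of_le (hhi hne) (hm_ge i u hμu hui)
      rw [if_pos (by rw [habs]; exact hlt)]
      have hmpos : 0 < m i := lt_trans ht.1 hlt
      cases h' : u i with
      | zero => exact absurd h' hui
      | pos =>
        rw [h'] at hzi
        rw [if_pos (by rw [hzi]; simpa [S2.emb] using hmpos)]
      | neg =>
        rw [h'] at hzi
        rw [if_neg (by rw [hzi]; simp [S2.emb]; nlinarith)]
  -- key2 : coverage
  have key2 : ∀ t, t ∈ Set.Ioc (0:ℝ) 1 → ∃ u, cond u t := by
    intro t ht
    set A : Finset (Fin n → S2) := Finset.univ.filter (fun v => μ v ≠ 0 ∧ t < T v) with hA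
    have hBgen : ∀ u : Fin n → S2, (μ u ≠ 0 ∨ u = zv) → T u - μ u ≤ t ∨ ∃ v₂,
        μ v₂ ≠ 0 ∧ t < T v₂ ∧ sle u v₂ ∧ v₂ ≠ u := by
      intro u hor
      by_cases hcon : T u - μ u ≤ t
      · exact Or.inl hcon
      · push_neg at hcon
        set E := (Finset.univ.filter (fun v => sle u v)).erase u with hE
        set B := E.filter (fun v => μ v ≠ 0) with hB
        have hBsum : ∑ v ∈ B, μ v = ∑ v ∈ E, μ v :=
          Finset.sum_filter_of_ne (fun v _ h => h)
        have hsumB : t < ∑ v ∈ B, μ v := by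
          rw [hBsum, ← hTsub u]; exact hcon
        have hBne : B.Nonempty := by
          rcases B.eq_empty_or_nonempty with h | h
          · rw [h] at hsumB; simp at hsumB; linarith [ht.1]
          · exact h
        have hBμ : ∀ v ∈ B, μ v ≠ 0 := fun v hv => (Finset.mem_filter.1 hv).2
        obtain ⟨v₂, hv₂B, hmin⟩ := chain_min B
          (fun a ha b hb => hch a b (hBμ a ha) (hBμ b hb)) hBne
        have hsub : B ⊆ Finset.univ.filter (fun v => sle v₂ v) := by
          intro v hv
          exact Finset.mem_filter.2 ⟨Finset.mem_univ _, hmin v hv⟩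
        have hTv₂ : ∑ v ∈ B, μ v ≤ T v₂ :=
          Finset.sum_le_sum_of_subset_of_nonneg hsub (fun v _ _ => h0 v)
        have hv₂E := (Finset.mem_filter.1 hv₂B).1
        have hv₂ne : v₂ ≠ u := (Finset.mem_erase.1 hv₂E).1
        have hv₂le : sle u v₂ := (Finset.mem_filter.1 (Finset.mem_erase.1 hv₂E).2).2
        exact Or.inr ⟨v₂, hBμ v₂ hv₂B, lt_of_lt_of_le hsumB hTv₂, hv₂le, hv₂ne⟩
    rcases A.eq_empty_or_nonempty with hAe | hAne
    · refine ⟨zv, Or.inr rfl, ?_, fun h => absurd rfl h⟩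
      rcases hBgen zv (Or.inr rfl) with h | ⟨v₂, hμ₂, hT₂, _, _⟩
      · exact h
      · exfalso
        have : v₂ ∈ A := Finset.mem_filter.2 ⟨Finset.mem_univ _, hμ₂, hT₂⟩
        rw [hAe] at this
        exact Finset.notMem_empty _ this
    · have hAμ : ∀ v ∈ A, μ v ≠ 0 := fun v hv => (Finset.mem_filter.1 hv).2.1
      obtain ⟨u, huA, hmax⟩ := chain_max A
        (fun a ha b hb => hch a b (hAμ a ha) (hAμ b hb)) hAne
      obtain ⟨_, hμu, hTu⟩ := Finset.mem_filter.1 huA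
      refine ⟨u, Or.inl hμu, ?_, fun _ => hTu⟩
      rcases hBgen u (Or.inl hμu) with h | ⟨v₂, hμ₂, hT₂, hle₂, hne₂⟩
      · exact h
      · exfalso
        have hv₂A : v₂ ∈ A := Finset.mem_filter.2 ⟨Finset.mem_univ _, hμ₂, hT₂⟩
        exact hne₂ (sle_antisymm (hmax v₂ hv₂A) hle₂)
  -- the fiber as an explicit set
  have hfib : {t : ℝ | t ∈ Set.Ioc (0:ℝ) 1 ∧ thresh z t = w}
      = {t : ℝ | t ∈ Set.Ioc (0:ℝ) 1 ∧ cond w t} := by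
    ext t
    simp only [Set.mem_setOf_eq]
    constructor
    · rintro ⟨ht, hth⟩
      obtain ⟨u, hu⟩ := key2 t ht
      have := key1 t ht u hu
      rw [hth] at this
      rw [← this] at hu
      exact ⟨ht, hu⟩
    · rintro ⟨ht, hcw⟩
      exact ⟨ht, key1 t ht w hcw⟩
  show (MeasureTheory.volume {t : ℝ | t ∈ Set.Ioc (0:ℝ) 1 ∧ thresh z t = w}).toReal = _
  rw [hfib]
  by_cases hor : μ w ≠ 0 ∨ w = zv
  · rcases eq_or_ne w zv with rfl | hwne
    · -- w = zv
      have ha0 : 0 ≤ T zv - μ zv := by linarith [hTm zv]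
      have ha1 : T zv - μ zv ≤ c := by linarith [h0 zv, hTzv]
      have hset : {t : ℝ | t ∈ Set.Ioc (0:ℝ) 1 ∧ cond zv t}
          = if T zv - μ zv ≤ 0 then Set.Ioc (0:ℝ) 1 else Set.Icc (T zv - μ zv) 1 := by
        ext t
        simp only [Set.mem_setOf_eq, hcond, Set.mem_Ioc]
        split_ifs with hle
        · simp only [Set.mem_Ioc]
          constructor
          · exact fun h => h.1
          · exact fun h => ⟨h, Or.inr trivial, by linarith [h.1], fun hh => absurd rfl hh⟩
        · push_neg at hle
          simp only [Set.mem_Icc]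
          constructor
          · rintro ⟨h1', _, h2', _⟩; exact ⟨h2', h1'.2⟩
          · rintro ⟨h1', h2'⟩
            exact ⟨⟨by linarith, h2'⟩, Or.inr trivial, h1', fun hh => absurd rfl hh⟩
      rw [hset]
      rw [if_pos rfl]
      split_ifs with hle
      · have : T zv - μ zv = 0 := le_antisymm hle ha0
        rw [Real.volume_Ioc, ENNReal.toReal_ofReal (by norm_num)]
        rw [hTzv] at this
        have : c = μ zv := by linarith
        linarith
      · rw [Real.volume_Icc, ENNReal.toReal_ofReal (by linarith [hTle zv, h1])]
        rw [hTzv] at *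
        linarith
    · -- w ≠ zv, μ w ≠ 0
      have hμw : μ w ≠ 0 := by
        rcases hor with h | h
        · exact h
        · exact absurd h hwne
      have ha0 : 0 ≤ T w - μ w := by linarith [hTm w]
      have hb1 : T w ≤ 1 := le_trans (hTle w) h1
      have hset : {t : ℝ | t ∈ Set.Ioc (0:ℝ) 1 ∧ cond w t}
          = if T w - μ w ≤ 0 then Set.Ioo (0:ℝ) (T w) else Set.Ico (T w - μ w) (T w) := by
        ext t
        simp only [Set.mem_setOf_eq, hcond, Set.mem_Ioc]
        split_ifs with hle
        · simp only [Set.mem_Ioo]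
          constructor
          · rintro ⟨h1', _, _, h3'⟩; exact ⟨h1'.1, h3' hwne⟩
          · rintro ⟨h1', h2'⟩
            exact ⟨⟨h1', by linarith⟩, Or.inl hμw, by linarith, fun _ => h2'⟩
        · push_neg at hle
          simp only [Set.mem_Ico]
          constructor
          · rintro ⟨_, _, h2', h3'⟩; exact ⟨h2', h3' hwne⟩
          · rintro ⟨h1', h2'⟩
            exact ⟨⟨by linarith, by linarith⟩, Or.inl hμw, h1', fun _ => h2'⟩
      rw [hset, if_neg hwne]
      split_ifs with hle
      · rw [Real.volume_Ioo, ENNReal.toReal_ofReal (by linarith [hTm w, h0 w])]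
        linarith
      · rw [Real.volume_Ico, ENNReal.toReal_ofReal (by linarith [h0 w])]
        linarith
  · -- w ∉ supp and w ≠ zv : empty fiber
    push_neg at hor
    have hset : {t : ℝ | t ∈ Set.Ioc (0:ℝ) 1 ∧ cond w t} = ∅ := by
      ext t
      simp only [Set.mem_setOf_eq, Set.mem_empty_iff_false, iff_false]
      rintro ⟨_, ⟨h | h, _, _⟩⟩
      · exact h hor.1
      · exact hor.2 h
    rw [hset]
    simp only [MeasureTheory.measure_empty, ENNReal.toReal_zero]
    rw [if_neg hor.2, hor.1]
    ring

-- ### Part 4 : lovasz on chain barycenters + uncrossing pointwise lemmas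

lemma lovasz_chain {n : ℕ} (f : (Fin n → S2) → EReal) (μ : (Fin n → S2) → ℝ)
    (h0 : ∀ u, 0 ≤ μ u) (h1 : (∑ u : Fin n → S2, μ u) = 1)
    (hch : ∀ u v, μ u ≠ 0 → μ v ≠ 0 → sle u v ∨ sle v u) :
    lovasz f (fun i => ∑ u : Fin n → S2, μ u * S2.emb (u i))
      = ∑ u : Fin n → S2, ((μ u : ℝ) : EReal) * f u := by
  unfold lovasz
  refine Finset.sum_congr rfl fun u _ => ?_
  rw [weight_chain μ h0 (le_of_eq h1) hch u, h1]
  norm_num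

def cntR : S2 → ℝ := fun a => if a = S2.zero then 0 else 1

lemma l1R (a b : S2) : cntR (S2.meet a b) + cntR (S2.pj a b)
    + 2 * (if a ≠ S2.zero ∧ b ≠ S2.zero ∧ a ≠ b then (1:ℝ) else 0) = cntR a + cntR b := by
  cases a <;> cases b <;> simp [cntR, S2.meet, S2.pj] <;> norm_num

lemma l2R (a b : S2) : cntR (S2.meet a b) = if a = b ∧ a ≠ S2.zero then (1:ℝ) else 0 := by
  cases a <;> cases b <;> simp [cntR, S2.meet]

lemma l3R (a b : S2) (h : ¬(a ≠ S2.zero ∧ b ≠ S2.zero ∧ a ≠ b)) :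
    cntR (S2.pj a b) = (if a = b ∧ a ≠ S2.zero then (1:ℝ) else 0)
      + ((if a ≠ S2.zero ∧ b = S2.zero then (1:ℝ) else 0)
        + (if b ≠ S2.zero ∧ a = S2.zero then (1:ℝ) else 0)) := by
  cases a <;> cases b <;> simp_all [cntR, S2.pj]

lemma l4R (a b : S2) (h : ¬(a ≠ S2.zero ∧ b ≠ S2.zero ∧ a ≠ b)) :
    cntR a = (if a = b ∧ a ≠ S2.zero then (1:ℝ) else 0)
      + (if a ≠ S2.zero ∧ b = S2.zero then (1:ℝ) else 0) := by
  cases a <;> cases b <;> simp_all [cntR]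

lemma l5R (a b : S2) (h : ¬(a ≠ S2.zero ∧ b ≠ S2.zero ∧ a ≠ b)) :
    cntR b = (if a = b ∧ a ≠ S2.zero then (1:ℝ) else 0)
      + (if b ≠ S2.zero ∧ a = S2.zero then (1:ℝ) else 0) := by
  cases a <;> cases b <;> simp_all [cntR]

lemma meet_eq_left {a b : S2} (h : S2.meet a b = a) : a = S2.zero ∨ a = b := by
  revert h; cases a <;> cases b <;> decide

lemma pj_eq_left {a b : S2} (h : S2.pj a b = a) : b = S2.zero ∨ b = a := by
  revert h; cases a <;> cases b <;> decide

lemma pj_eq_right {a b : S2} (h : S2.pj a b = b) : a = S2.zero ∨ a = b := by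
  revert h; cases a <;> cases b <;> decide

lemma meet_eq_right {a b : S2} (h : S2.meet a b = b) : b = S2.zero ∨ b = a := by
  revert h; cases a <;> cases b <;> decide

-- ### Part 5 : the key inequality (Lovász extension vs arbitrary convex representations)

set_option maxHeartbeats 2000000 in
lemma star {n : ℕ} (f : (Fin n → S2) → EReal) (hf : ∀ u, f u ≠ ⊥)
    (hsub : ∀ x y : Fin n → S2,
      f (fun i => S2.meet (x i) (y i)) + f (fun i => S2.pj (x i) (y i)) ≤ f x + f y)
    (z : Fin n → ℝ) (lam : (Fin n → S2) → ℝ)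
    (hl0 : ∀ u, 0 ≤ lam u) (hl1 : (∑ u : Fin n → S2, lam u) = 1)
    (hlz : ∀ i, ∑ u : Fin n → S2, lam u * S2.emb (u i) = z i) :
    lovasz f z ≤ ∑ u : Fin n → S2, ((lam u : ℝ) : EReal) * f u := by
  classical
  by_cases hB : (∑ u : Fin n → S2, ((lam u : ℝ) : EReal) * f u) = ⊤
  · rw [hB]; exact le_top
  -- supports lie in the finite part of f
  have htne : ∀ (ν : (Fin n → S2) → ℝ), (∀ u, 0 ≤ ν u) →
      ∀ u, ((ν u : ℝ) : EReal) * f u ≠ ⊥ :=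
    fun ν hν u => ereal_term_ne_bot _ (hν u) _ (hf u)
  have hD : ∀ u, lam u ≠ 0 → f u ≠ ⊤ := by
    intro u hu hfu
    have hlt : (0:ℝ) < lam u := lt_of_le_of_ne (hl0 u) (Ne.symm hu)
    have := ereal_term_ne_top_of_sum (fun a _ => htne lam hl0 a) hB u (Finset.mem_univ u)
    apply this
    rw [hfu, EReal.mul_top_of_pos (by exact_mod_cast hlt)]
  set g : (Fin n → S2) → ℝ := fun u => (f u).toReal with hg
  -- EReal cost of a measure supported on the finite part
  have hcost : ∀ (ν : (Fin n → S2) → ℝ), (∀ u, f u = ⊤ → ν u = 0) →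
      (∑ u : Fin n → S2, ((ν u : ℝ) : EReal) * f u)
        = (((∑ u : Fin n → S2, ν u * g u : ℝ)) : EReal) := by
    intro ν hν
    rw [ereal_coe_sum]
    refine Finset.sum_congr rfl fun u _ => ?_
    by_cases hfu : f u = ⊤
    · rw [hν u hfu, hfu]
      simp
    · conv_lhs => rw [← EReal.coe_toReal hfu (hf u)]
      rw [← EReal.coe_mul]
  have hlamD : ∀ u, f u = ⊤ → lam u = 0 := by
    intro u hfu
    by_contra hlu
    exact hD u hlu hfu
  set Brl : ℝ := ∑ u : Fin n → S2, lam u * g u with hBrl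
  set K : Set ((Fin n → S2) → ℝ) := {ν | (∀ u, 0 ≤ ν u) ∧ (∑ u : Fin n → S2, ν u) = 1 ∧
    (∀ i, ∑ u : Fin n → S2, ν u * S2.emb (u i) = z i) ∧ (∀ u, f u = ⊤ → ν u = 0) ∧
    (∑ u : Fin n → S2, ν u * g u) ≤ Brl} with hK
  have hKlam : lam ∈ K := ⟨hl0, hl1, hlz, hlamD, le_refl _⟩
  have hcont : ∀ h : (Fin n → S2) → ℝ,
      Continuous (fun ν : (Fin n → S2) → ℝ => ∑ u : Fin n → S2, ν u * h u) :=
    fun h => continuous_finset_sum _ fun u _ => (continuous_apply u).mul continuous_const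
  have hcont1 : Continuous (fun ν : (Fin n → S2) → ℝ => ∑ u : Fin n → S2, ν u) := by
    have := hcont (fun _ => 1)
    simpa using this
  have hKclosed : IsClosed K := by
    have hKeq : K = (⋂ u, {ν : (Fin n → S2) → ℝ | 0 ≤ ν u})
        ∩ ({ν : (Fin n → S2) → ℝ | (∑ u : Fin n → S2, ν u) = 1}
        ∩ ((⋂ i, {ν : (Fin n → S2) → ℝ | ∑ u : Fin n → S2, ν u * S2.emb (u i) = z i})
        ∩ ((⋂ u, {ν : (Fin n → S2) → ℝ | f u = ⊤ → ν u = 0})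
        ∩ {ν : (Fin n → S2) → ℝ | (∑ u : Fin n → S2, ν u * g u) ≤ Brl}))) := by
      ext ν
      simp only [hK, Set.mem_setOf_eq, Set.mem_inter_iff, Set.mem_iInter]
    rw [hKeq]
    refine IsClosed.inter (isClosed_iInter fun u =>
        isClosed_le continuous_const (continuous_apply u)) ?_
    refine IsClosed.inter (isClosed_eq hcont1 continuous_const) ?_
    refine IsClosed.inter (isClosed_iInter fun i =>
        isClosed_eq (hcont _) continuous_const) ?_
    refine IsClosed.inter (isClosed_iInter fun u => ?_) (isClosed_le (hcont g) continuous_const)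
    by_cases hfu : f u = ⊤
    · have he : {ν : (Fin n → S2) → ℝ | f u = ⊤ → ν u = 0} = {ν | ν u = 0} := by
        ext ν; simp [hfu]
      rw [he]; exact isClosed_eq (continuous_apply u) continuous_const
    · have he : {ν : (Fin n → S2) → ℝ | f u = ⊤ → ν u = 0} = Set.univ := by
        ext ν; simp [hfu]
      rw [he]; exact isClosed_univ
  have hKsub : K ⊆ Set.Icc (0 : (Fin n → S2) → ℝ) 1 := by
    intro ν hν
    obtain ⟨hν0, hν1, _, _, _⟩ := hν
    constructor
    · intro u; exact hν0 u
    · intro u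
      calc ν u ≤ ∑ u' : Fin n → S2, ν u' :=
            Finset.single_le_sum (fun v _ => hν0 v) (Finset.mem_univ u)
        _ = 1 := hν1
  have hKcomp : IsCompact K := IsCompact.of_isClosed_subset isCompact_Icc hKclosed hKsub
  set ns : (Fin n → S2) → ℝ := fun u => ∑ i : Fin n, cntR (u i) with hns
  set Phi1 : ((Fin n → S2) → ℝ) → ℝ := fun ν => ∑ u : Fin n → S2, ν u * ns u with hPhi1
  set Phi2 : ((Fin n → S2) → ℝ) → ℝ := fun ν => ∑ u : Fin n → S2, ν u * (ns u)^2 with hPhi2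
  obtain ⟨nu1, hnu1K, hmin⟩ := hKcomp.exists_isMinOn ⟨lam, hKlam⟩ (hcont ns).continuousOn
  set S : Set ((Fin n → S2) → ℝ) := K ∩ {ν | Phi1 ν ≤ Phi1 nu1} with hS
  have hScomp : IsCompact S := hKcomp.inter_right (isClosed_le (hcont ns) continuous_const)
  have hSne : S.Nonempty := ⟨nu1, hnu1K, show Phi1 nu1 ≤ Phi1 nu1 from le_refl _⟩
  obtain ⟨nu2, hnu2S, hmax⟩ := hScomp.exists_isMaxOn hSne
    (hcont (fun u => (ns u)^2)).continuousOn
  obtain ⟨hnu2K, hnu2Phi⟩ := hnu2S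
  obtain ⟨hν0, hν1, hνz, hνD, hνc⟩ := hnu2K
  -- the optimal measure is supported on a chain
  have hchain : ∀ u v, nu2 u ≠ 0 → nu2 v ≠ 0 → sle u v ∨ sle v u := by
    by_contra hcon
    push_neg at hcon
    obtain ⟨u, v, hu, hv, huv1, huv2⟩ := hcon
    have huvne : u ≠ v := fun h => huv1 (h ▸ sle_refl u)
    set mu : Fin n → S2 := fun i => S2.meet (u i) (v i) with hmu
    set pu : Fin n → S2 := fun i => S2.pj (u i) (v i) with hpu
    have hmu_ne_u : mu ≠ u := by
      intro h
      refine huv1 fun i => ?_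
      exact meet_eq_left (congrFun h i)
    have hmu_ne_v : mu ≠ v := by
      intro h
      refine huv2 fun i => ?_
      have := meet_eq_right (a := u i) (b := v i) (congrFun h i)
      tauto
    have hpu_ne_u : pu ≠ u := by
      intro h
      refine huv2 fun i => ?_
      exact pj_eq_left (congrFun h i)
    have hpu_ne_v : pu ≠ v := by
      intro h
      refine huv1 fun i => ?_
      exact pj_eq_right (congrFun h i)
    set ε : ℝ := min (nu2 u) (nu2 v) with hε
    have hε0 : 0 < ε := lt_min (lt_of_le_of_ne (hν0 u) (Ne.symm hu))
      (lt_of_le_of_ne (hν0 v) (Ne.symm hv))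
    set nu' : (Fin n → S2) → ℝ := fun w => nu2 w + ε * ((if w = mu then 1 else 0)
      + (if w = pu then 1 else 0) - (if w = u then 1 else 0) - (if w = v then 1 else 0))
      with hnu'
    have hupd : ∀ h : (Fin n → S2) → ℝ, (∑ w : Fin n → S2, nu' w * h w)
        = (∑ w : Fin n → S2, nu2 w * h w) + ε * (h mu + h pu - h u - h v) := by
      intro h
      have hterm : ∀ w, nu' w * h w = nu2 w * h w + ε * ((if w = mu then h w else 0)
          + (if w = pu then h w else 0) - (if w = u then h w else 0)
          - (if w = v then h w else 0)) := by
        intro w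
        simp only [hnu']
        split_ifs <;> ring
      rw [Finset.sum_congr rfl (fun w _ => hterm w), Finset.sum_add_distrib, ← Finset.mul_sum]
      congr 1
      congr 1
      rw [Finset.sum_sub_distrib, Finset.sum_sub_distrib, Finset.sum_add_distrib]
      simp [Finset.sum_ite_eq']
    -- f is finite at mu and pu
    have hfu' : f u ≠ ⊤ := fun h => hu (hνD u h)
    have hfv' : f v ≠ ⊤ := fun h => hv (hνD v h)
    have hsumfin : f u + f v ≠ ⊤ := fun h => (EReal.add_lt_top hfu' hfv').ne h
    have hmp : f mu + f pu ≤ f u + f v := hsub u v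
    have hfmu : f mu ≠ ⊤ := by
      intro h
      rw [h, EReal.top_add_of_ne_bot (hf pu)] at hmp
      exact hsumfin (top_le_iff.1 hmp)
    have hfpu : f pu ≠ ⊤ := by
      intro h
      rw [h, EReal.add_top_of_ne_bot (hf mu)] at hmp
      exact hsumfin (top_le_iff.1 hmp)
    -- the real inequality between g-values
    have hgmp : g mu + g pu ≤ g u + g v := by
      have h1' : f mu = ((g mu : ℝ) : EReal) := (EReal.coe_toReal hfmu (hf mu)).symm
      have h2' : f pu = ((g pu : ℝ) : EReal) := (EReal.coe_toReal hfpu (hf pu)).symm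
      have h3' : f u = ((g u : ℝ) : EReal) := (EReal.coe_toReal hfu' (hf u)).symm
      have h4' : f v = ((g v : ℝ) : EReal) := (EReal.coe_toReal hfv' (hf v)).symm
      rw [h1', h2', h3', h4', ← EReal.coe_add, ← EReal.coe_add, EReal.coe_le_coe_iff] at hmp
      exact hmp
    -- nu' is in K
    have hεu : ε ≤ nu2 u := by rw [hε]; exact min_le_left _ _
    have hεv : ε ≤ nu2 v := by rw [hε]; exact min_le_right _ _
    have hnu'0 : ∀ w, 0 ≤ nu' w := by
      intro w
      simp only [hnu']
      by_cases h1' : w = u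
      · subst h1'
        rw [if_pos rfl, if_neg (Ne.symm hmu_ne_u), if_neg (Ne.symm hpu_ne_u), if_neg huvne]
        nlinarith [hν0 w]
      · rw [if_neg h1']
        by_cases h2' : w = v
        · subst h2'
          rw [if_pos rfl, if_neg (Ne.symm hmu_ne_v), if_neg (Ne.symm hpu_ne_v)]
          nlinarith [hν0 w]
        · rw [if_neg h2']
          split_ifs <;> nlinarith [hν0 w, hε0]
    have hsum' : (∑ w : Fin n → S2, nu' w) = 1 := by
      have h := hupd (fun _ => 1)
      simp only [mul_one] at h
      rw [h, hν1]
      ring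
    have hz' : ∀ i, (∑ w : Fin n → S2, nu' w * S2.emb (w i)) = z i := by
      intro i
      have h := hupd (fun w => S2.emb (w i))
      rw [h, hνz i]
      have hX : S2.emb (mu i) + S2.emb (pu i) - S2.emb (u i) - S2.emb (v i) = 0 := by
        have := S2.emb_meet_pj (u i) (v i)
        have hmui : S2.emb (mu i) = S2.emb (S2.meet (u i) (v i)) := rfl
        have hpui : S2.emb (pu i) = S2.emb (S2.pj (u i) (v i)) := rfl
        rw [hmui, hpui]
        linarith
      rw [hX]
      ring
    have hD' : ∀ w, f w = ⊤ → nu' w = 0 := by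
      intro w hw
      have hwu : w ≠ u := fun h => hfu' (h ▸ hw)
      have hwv : w ≠ v := fun h => hfv' (h ▸ hw)
      have hwmu : w ≠ mu := fun h => hfmu (h ▸ hw)
      have hwpu : w ≠ pu := fun h => hfpu (h ▸ hw)
      simp only [hnu', if_neg hwu, if_neg hwv, if_neg hwmu, if_neg hwpu]
      rw [hνD w hw]
      ring
    have hc' : (∑ w : Fin n → S2, nu' w * g w) ≤ Brl := by
      rw [hupd g]
      have hneg : ε * (g mu + g pu - g u - g v) ≤ 0 :=
        mul_nonpos_of_nonneg_of_nonpos hε0.le (by linarith)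
      linarith [hνc]
    have hnu'K : nu' ∈ K := ⟨hnu'0, hsum', hz', hD', hc'⟩
    -- counting identities
    have hcnt := Finset.sum_congr rfl
      (fun i (_ : i ∈ (Finset.univ : Finset (Fin n))) => l1R (u i) (v i))
    simp only [Finset.sum_add_distrib, ← Finset.mul_sum] at hcnt
    set aR : ℝ := ∑ i : Fin n, (if u i ≠ S2.zero ∧ v i = S2.zero then (1:ℝ) else 0) with haR
    set bR : ℝ := ∑ i : Fin n, (if v i ≠ S2.zero ∧ u i = S2.zero then (1:ℝ) else 0) with hbR
    set cR : ℝ := ∑ i : Fin n, (if u i = v i ∧ u i ≠ S2.zero then (1:ℝ) else 0) with hcR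
    set gR : ℝ := ∑ i : Fin n, (if u i ≠ S2.zero ∧ v i ≠ S2.zero ∧ u i ≠ v i then (1:ℝ) else 0)
      with hgR
    have hgR0 : 0 ≤ gR := by
      rw [hgR]; refine Finset.sum_nonneg fun i _ => by positivity
    have hnsmu : ns mu = ∑ i : Fin n, cntR (S2.meet (u i) (v i)) := by
      simp only [hns, hmu]
    have hnspu : ns pu = ∑ i : Fin n, cntR (S2.pj (u i) (v i)) := by
      simp only [hns, hpu]
    have hnsu : ns u = ∑ i : Fin n, cntR (u i) := by simp only [hns]
    have hnsv : ns v = ∑ i : Fin n, cntR (v i) := by simp only [hns]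
    have hId1 : ns mu + ns pu + 2 * gR = ns u + ns v := by
      rw [hnsmu, hnspu, hnsu, hnsv]
      linarith [hcnt]
    have hP1 : Phi1 nu' = Phi1 nu2 - ε * (2 * gR) := by
      have h := hupd ns
      have hX : ns mu + ns pu - ns u - ns v = -(2 * gR) := by linarith
      rw [hPhi1]
      simp only
      rw [h, hX]
      ring
    have hmin' : ∀ ν ∈ K, Phi1 nu1 ≤ Phi1 ν := fun ν hν => isMinOn_iff.1 hmin ν hν
    have hmax' : ∀ ν ∈ S, Phi2 ν ≤ Phi2 nu2 := fun ν hν => isMaxOn_iff.1 hmax ν hν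
    by_cases hg : gR = 0
    · -- no conflicts
      have hnc : ∀ i, ¬(u i ≠ S2.zero ∧ v i ≠ S2.zero ∧ u i ≠ v i) := by
        intro i hcon
        have hall := (Finset.sum_eq_zero_iff_of_nonneg
          (fun i (_ : i ∈ (Finset.univ : Finset (Fin n))) => by positivity)).1 (hgR ▸ hg) i
          (Finset.mem_univ i)
        rw [if_pos hcon] at hall
        exact one_ne_zero hall
      have hns_mu2 : ns mu = cR := by
        rw [hnsmu, hcR]
        exact Finset.sum_congr rfl fun i _ => l2R (u i) (v i)
      have hns_pu2 : ns pu = cR + (aR + bR) := by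
        rw [hnspu, hcR, haR, hbR, ← Finset.sum_add_distrib, ← Finset.sum_add_distrib]
        exact Finset.sum_congr rfl fun i _ => l3R (u i) (v i) (hnc i)
      have hns_u2 : ns u = cR + aR := by
        rw [hnsu, hcR, haR, ← Finset.sum_add_distrib]
        exact Finset.sum_congr rfl fun i _ => l4R (u i) (v i) (hnc i)
      have hns_v2 : ns v = cR + bR := by
        rw [hnsv, hcR, hbR, ← Finset.sum_add_distrib]
        exact Finset.sum_congr rfl fun i _ => l5R (u i) (v i) (hnc i)
      have ha1 : 1 ≤ aR := by
        have : ∃ i, ¬(u i = S2.zero ∨ u i = v i) := by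
          by_contra hcc
          push_neg at hcc
          exact huv1 fun i => by
            have := hcc i
            tauto
        obtain ⟨i0, hi0⟩ := this
        push_neg at hi0
        have hvz : v i0 = S2.zero := by
          by_contra hvz
          exact hnc i0 ⟨hi0.1, hvz, hi0.2⟩
        calc (1:ℝ) = if u i0 ≠ S2.zero ∧ v i0 = S2.zero then (1:ℝ) else 0 := by
              rw [if_pos ⟨hi0.1, hvz⟩]
          _ ≤ aR := by
              rw [haR]
              exact Finset.single_le_sum (f := fun i =>
                (if u i ≠ S2.zero ∧ v i = S2.zero then (1:ℝ) else 0))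
                (fun i _ => by positivity) (Finset.mem_univ i0)
      have hb1 : 1 ≤ bR := by
        have : ∃ i, ¬(v i = S2.zero ∨ v i = u i) := by
          by_contra hcc
          push_neg at hcc
          exact huv2 fun i => by
            have := hcc i
            tauto
        obtain ⟨i0, hi0⟩ := this
        push_neg at hi0
        have huz : u i0 = S2.zero := by
          by_contra huz
          exact hnc i0 ⟨huz, hi0.1, fun hh => hi0.2 hh.symm⟩
        calc (1:ℝ) = if v i0 ≠ S2.zero ∧ u i0 = S2.zero then (1:ℝ) else 0 := by
              rw [if_pos ⟨hi0.1, huz⟩]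
          _ ≤ bR := by
              rw [hbR]
              exact Finset.single_le_sum (f := fun i =>
                (if v i ≠ S2.zero ∧ u i = S2.zero then (1:ℝ) else 0))
                (fun i _ => by positivity) (Finset.mem_univ i0)
      have hP1eq : Phi1 nu' = Phi1 nu2 := by rw [hP1, hg]; ring
      have hS' : nu' ∈ S := ⟨hnu'K, show Phi1 nu' ≤ Phi1 nu1 by rw [hP1eq]; exact hnu2Phi⟩
      have hP2 : Phi2 nu' = Phi2 nu2 + ε * (2 * aR * bR) := by
        have h := hupd (fun w => (ns w)^2)
        have hX : (ns mu)^2 + (ns pu)^2 - (ns u)^2 - (ns v)^2 = 2 * aR * bR := by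
          rw [hns_mu2, hns_pu2, hns_u2, hns_v2]
          ring
        rw [hPhi2]
        simp only
        rw [h, hX]
      have : Phi2 nu2 < Phi2 nu' := by
        rw [hP2]
        have hpos : 0 < ε * (2 * aR * bR) :=
          mul_pos hε0 (mul_pos (by linarith : (0:ℝ) < 2 * aR) (by linarith : (0:ℝ) < bR))
        linarith
      linarith [hmax' nu' hS']
    · -- a conflict exists : Phi1 strictly decreases
      have hgpos : 0 < gR := lt_of_le_of_ne hgR0 (Ne.symm hg)
      have h1 : Phi1 nu1 ≤ Phi1 nu' := hmin' nu' hnu'K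
      have h2 : Phi1 nu' < Phi1 nu2 := by
        rw [hP1]
        have hpos : 0 < ε * (2 * gR) :=
          mul_pos hε0 (by linarith : (0:ℝ) < 2 * gR)
        linarith
      have h3 : Phi1 nu2 ≤ Phi1 nu1 := hnu2Phi
      linarith
  -- conclusion : nu2 is a chain representation of z
  have hzeq : (fun i => ∑ u : Fin n → S2, nu2 u * S2.emb (u i)) = z := funext hνz
  have hlov : lovasz f z = ∑ u : Fin n → S2, ((nu2 u : ℝ) : EReal) * f u := by
    rw [← hzeq]
    exact lovasz_chain f nu2 hν0 hν1 hchain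
  rw [hlov, hcost nu2 hνD, hcost lam hlamD]
  exact EReal.coe_le_coe_iff.2 hνc

-- ### Part 6 : assembly

lemma meet_sle_pj_pt : ∀ a b : S2, S2.meet a b = S2.zero ∨ S2.meet a b = S2.pj a b := by
  decide

lemma lovasz_vertex {n : ℕ} (f : (Fin n → S2) → EReal) (u : Fin n → S2) :
    lovasz f (fun i => S2.emb (u i)) = f u := by
  classical
  have hbar : (fun i => ∑ w : Fin n → S2, (if w = u then (1:ℝ) else 0) * S2.emb (w i))
      = fun i => S2.emb (u i) := by
    funext i
    rw [Finset.sum_eq_single u (fun b _ hb => by rw [if_neg hb, zero_mul])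
      (fun h => absurd (Finset.mem_univ u) h), if_pos rfl, one_mul]
  have hch : ∀ a b : Fin n → S2, (if a = u then (1:ℝ) else 0) ≠ 0 →
      (if b = u then (1:ℝ) else 0) ≠ 0 → sle a b ∨ sle b a := by
    intro a b ha hb
    have ha' : a = u := by by_contra h; rw [if_neg h] at ha; exact ha rfl
    have hb' : b = u := by by_contra h; rw [if_neg h] at hb; exact hb rfl
    rw [ha', hb']
    exact Or.inl (sle_refl u)
  have h1 : (∑ w : Fin n → S2, (if w = u then (1:ℝ) else 0)) = 1 := by
    rw [Finset.sum_ite_eq' Finset.univ u (fun _ => (1:ℝ))]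
    simp
  calc lovasz f (fun i => S2.emb (u i))
      = lovasz f (fun i => ∑ w : Fin n → S2, (if w = u then (1:ℝ) else 0) * S2.emb (w i)) := by
        rw [hbar]
    _ = ∑ w : Fin n → S2, (((if w = u then (1:ℝ) else 0) : ℝ) : EReal) * f w :=
        lovasz_chain f _ (fun w => by split_ifs <;> norm_num) h1 hch
    _ = f u := by rw [ereal_sum_ite_mul f u 1]; simp


/-- A function `f : {-1,0,1}ⁿ → ℝ ∪ {∞}` is bisubmodular iff its Lovász extension is convex
on the cube `[-1,1]ⁿ`. -/
theorem stmt8 {n : ℕ} (f : (Fin n → S2) → EReal) (hf : ∀ u, f u ≠ ⊥) :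
    (∀ x y : Fin n → S2,
      f (fun i => S2.meet (x i) (y i)) + f (fun i => S2.pj (x i) (y i)) ≤ f x + f y) ↔
    (∀ x y : Fin n → ℝ, (∀ i, |x i| ≤ 1) → (∀ i, |y i| ≤ 1) →
      ∀ t : ℝ, 0 ≤ t → t ≤ 1 →
        lovasz f (fun i => t * x i + (1 - t) * y i) ≤
          ((t : ℝ) : EReal) * lovasz f x + (((1 - t : ℝ)) : EReal) * lovasz f y) := by
  classical
  constructor
  · -- bisubmodular → convex
    intro hsub x y hx hy t ht0 ht1
    set z : Fin n → ℝ := fun i => t * x i + (1 - t) * y i with hz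
    set lam : (Fin n → S2) → ℝ := fun u => t * weight x u + (1 - t) * weight y u with hlam
    have ht1' : (0:ℝ) ≤ 1 - t := by linarith
    have hl0 : ∀ u, 0 ≤ lam u := fun u => add_nonneg (mul_nonneg ht0 (weight_nonneg x u))
      (mul_nonneg ht1' (weight_nonneg y u))
    have hl1 : (∑ u : Fin n → S2, lam u) = 1 := by
      simp only [hlam]
      rw [Finset.sum_add_distrib, ← Finset.mul_sum, ← Finset.mul_sum, sum_weight, sum_weight]
      ring
    have hlz : ∀ i, (∑ u : Fin n → S2, lam u * S2.emb (u i)) = z i := by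
      intro i
      have hsp : ∀ u ∈ (Finset.univ : Finset (Fin n → S2)), lam u * S2.emb (u i)
          = t * (weight x u * S2.emb (u i)) + (1 - t) * (weight y u * S2.emb (u i)) := by
        intro u _
        simp only [hlam]
        ring
      rw [Finset.sum_congr rfl hsp, Finset.sum_add_distrib, ← Finset.mul_sum, ← Finset.mul_sum,
        sum_weight_emb x i (hx i), sum_weight_emb y i (hy i)]
    have hstar := star f hf hsub z lam hl0 hl1 hlz
    refine le_trans hstar (le_of_eq ?_)
    have hsplit : ∀ u ∈ (Finset.univ : Finset (Fin n → S2)), ((lam u : ℝ) : EReal) * f u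
        = ((t * weight x u : ℝ) : EReal) * f u + (((1 - t) * weight y u : ℝ) : EReal) * f u := by
      intro u _
      simp only [hlam]
      rw [EReal.coe_add, EReal.right_distrib_of_nonneg
        (EReal.coe_nonneg.2 (mul_nonneg ht0 (weight_nonneg x u)))
        (EReal.coe_nonneg.2 (mul_nonneg ht1' (weight_nonneg y u)))]
    rw [Finset.sum_congr rfl hsplit, Finset.sum_add_distrib]
    have h1 : (∑ u : Fin n → S2, ((t * weight x u : ℝ) : EReal) * f u)
        = ((t:ℝ) : EReal) * lovasz f x := by
      unfold lovasz
      rw [ereal_coe_mul_sum t ht0 (fun u _ => ereal_term_ne_bot _ (weight_nonneg x u) _ (hf u))]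
      refine Finset.sum_congr rfl fun u _ => ?_
      rw [EReal.coe_mul, mul_assoc]
    have h2 : (∑ u : Fin n → S2, (((1 - t) * weight y u : ℝ) : EReal) * f u)
        = (((1 - t:ℝ)) : EReal) * lovasz f y := by
      unfold lovasz
      rw [ereal_coe_mul_sum (1 - t) ht1' (fun u _ => ereal_term_ne_bot _ (weight_nonneg y u) _ (hf u))]
      refine Finset.sum_congr rfl fun u _ => ?_
      rw [EReal.coe_mul, mul_assoc]
    rw [h1, h2]
  · -- convex → bisubmodular
    intro hconv x y
    set m : Fin n → S2 := fun i => S2.meet (x i) (y i) with hm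
    set p : Fin n → S2 := fun i => S2.pj (x i) (y i) with hp
    have hkey := hconv (fun i => S2.emb (x i)) (fun i => S2.emb (y i))
      (fun i => S2.emb_abs_le _) (fun i => S2.emb_abs_le _) 2⁻¹ (by norm_num) (by norm_num)
    rw [lovasz_vertex f x, lovasz_vertex f y] at hkey
    have h12 : (1 - 2⁻¹ : ℝ) = 2⁻¹ := by norm_num
    simp only [h12] at hkey
    -- identify the midpoint
    set μ : (Fin n → S2) → ℝ := fun w => (if w = m then (2⁻¹:ℝ) else 0)
      + (if w = p then (2⁻¹:ℝ) else 0) with hμ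
    have hμ0 : ∀ w, 0 ≤ μ w := by
      intro w
      simp only [hμ]
      split_ifs <;> norm_num
    have hμ1 : (∑ w : Fin n → S2, μ w) = 1 := by
      simp only [hμ]
      rw [Finset.sum_add_distrib, Finset.sum_ite_eq' Finset.univ m (fun _ => (2⁻¹:ℝ)),
        Finset.sum_ite_eq' Finset.univ p (fun _ => (2⁻¹:ℝ))]
      simp
      norm_num
    have hsmp : sle m p := by
      intro i
      exact meet_sle_pj_pt (x i) (y i)
    have hμch : ∀ a b, μ a ≠ 0 → μ b ≠ 0 → sle a b ∨ sle b a := by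
      have hsupp : ∀ w, μ w ≠ 0 → w = m ∨ w = p := by
        intro w hw
        by_contra hc
        push_neg at hc
        simp only [hμ, if_neg hc.1, if_neg hc.2, add_zero] at hw
        exact hw rfl
      intro a b ha hb
      rcases hsupp a ha with rfl | rfl <;> rcases hsupp b hb with rfl | rfl
      · exact Or.inl (sle_refl _)
      · exact Or.inl hsmp
      · exact Or.inr hsmp
      · exact Or.inl (sle_refl _)
    have hbar : (fun i => (2⁻¹:ℝ) * S2.emb (x i) + (2⁻¹:ℝ) * S2.emb (y i))
        = fun i => ∑ w : Fin n → S2, μ w * S2.emb (w i) := by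
      funext i
      have hsp : ∀ w ∈ (Finset.univ : Finset (Fin n → S2)), μ w * S2.emb (w i)
          = (if w = m then (2⁻¹:ℝ) else 0) * S2.emb (w i)
            + (if w = p then (2⁻¹:ℝ) else 0) * S2.emb (w i) := by
        intro w _
        simp only [hμ]
        ring
      rw [Finset.sum_congr rfl hsp, Finset.sum_add_distrib,
        Finset.sum_eq_single m (fun b _ hb => by rw [if_neg hb, zero_mul])
          (fun h => absurd (Finset.mem_univ m) h),
        Finset.sum_eq_single p (fun b _ hb => by rw [if_neg hb, zero_mul])
          (fun h => absurd (Finset.mem_univ p) h), if_pos rfl, if_pos rfl]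
      have hmi : S2.emb (m i) = S2.emb (S2.meet (x i) (y i)) := rfl
      have hpi : S2.emb (p i) = S2.emb (S2.pj (x i) (y i)) := rfl
      have := S2.emb_meet_pj (x i) (y i)
      rw [hmi, hpi]
      linarith
    rw [hbar, lovasz_chain f μ hμ0 hμ1 hμch] at hkey
    have hLmid : (∑ w : Fin n → S2, ((μ w : ℝ) : EReal) * f w)
        = ((2⁻¹:ℝ) : EReal) * f m + ((2⁻¹:ℝ) : EReal) * f p := by
      have hsp : ∀ w ∈ (Finset.univ : Finset (Fin n → S2)), ((μ w : ℝ) : EReal) * f w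
          = (((if w = m then (2⁻¹:ℝ) else 0) : ℝ) : EReal) * f w
            + (((if w = p then (2⁻¹:ℝ) else 0) : ℝ) : EReal) * f w := by
        intro w _
        simp only [hμ]
        rw [EReal.coe_add, EReal.right_distrib_of_nonneg
          (EReal.coe_nonneg.2 (by split_ifs <;> norm_num))
          (EReal.coe_nonneg.2 (by split_ifs <;> norm_num))]
      rw [Finset.sum_congr rfl hsp, Finset.sum_add_distrib, ereal_sum_ite_mul f m 2⁻¹,
        ereal_sum_ite_mul f p 2⁻¹]
    rw [hLmid] at hkey
    -- now finish by cases on finiteness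
    by_cases hfx : f x = ⊤
    · rw [hfx, EReal.top_add_of_ne_bot (hf y)]
      exact le_top
    by_cases hfy : f y = ⊤
    · rw [hfy, EReal.add_top_of_ne_bot (hf x)]
      exact le_top
    have hhalfpos : (0:EReal) < ((2⁻¹:ℝ) : EReal) := by
      exact_mod_cast (by norm_num : (0:ℝ) < 2⁻¹)
    have hfm : f m ≠ ⊤ := by
      intro hc
      rw [hc, EReal.mul_top_of_pos hhalfpos,
        EReal.top_add_of_ne_bot (ereal_term_ne_bot _ (by norm_num) _ (hf p))] at hkey
      rw [← EReal.coe_toReal hfx (hf x), ← EReal.coe_toReal hfy (hf y), ← EReal.coe_mul,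
        ← EReal.coe_mul, ← EReal.coe_add] at hkey
      exact EReal.coe_ne_top _ (top_le_iff.1 hkey)
    have hfp : f p ≠ ⊤ := by
      intro hc
      rw [hc, EReal.mul_top_of_pos hhalfpos,
        EReal.add_top_of_ne_bot (ereal_term_ne_bot _ (by norm_num) _ (hf m))] at hkey
      rw [← EReal.coe_toReal hfx (hf x), ← EReal.coe_toReal hfy (hf y), ← EReal.coe_mul,
        ← EReal.coe_mul, ← EReal.coe_add] at hkey
      exact EReal.coe_ne_top _ (top_le_iff.1 hkey)
    rw [← EReal.coe_toReal hfx (hf x), ← EReal.coe_toReal hfy (hf y),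
      ← EReal.coe_toReal hfm (hf m), ← EReal.coe_toReal hfp (hf p)] at hkey ⊢
    rw [← EReal.coe_mul, ← EReal.coe_mul, ← EReal.coe_mul, ← EReal.coe_mul, ← EReal.coe_add,
      ← EReal.coe_add, EReal.coe_le_coe_iff] at hkey
    rw [← EReal.coe_add, ← EReal.coe_add, EReal.coe_le_coe_iff]
    linarith
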